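/- In the Gibbs distribution over monotone alignments, p(φ) = e^{−Σ_k cost(φ(k),k)} / Z with Z = Σ_φ e^{−Σ_k cost(φ(k),k)}, the marginal probability that z_j aligns to x_i equals w_{i,j} = f_{i,j}·b_{i,j}/(c_{i,j}·Z), where c_{i,j} = e^{−cost(i,j)} and f, b are the forward and backward partition functions; and the expected total cost satisfies E_φ[Σ_k cost(φ(k),k)] = Σ_{i,j} w_{i,j}·cost(i,j). -/

import Mathlib

open scoped Classical

/-- Forward partition function of monotone alignments (see context): sum over strictly
increasing `φ : {1,…,j} → {1,…,i}` with `φ j = i` of `∏_{k≤j} c (φ k) k`. -/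
noncomputable def fwd (c : ℕ → ℕ → ℝ) (i j : ℕ) : ℝ :=
  ∑ φ ∈ Finset.univ.filter
      (fun φ : Fin j → Fin i =>
        StrictMono φ ∧ ∀ k : Fin j, (k : ℕ) = j - 1 → ((φ k : Fin i) : ℕ) = i - 1),
    ∏ k : Fin j, c ((φ k : ℕ) + 1) ((k : ℕ) + 1)

/-- Backward partition function of monotone alignments: sum over strictly increasing
`ψ : {j,…,N} → {i,…,T}` with `ψ j = i`, `ψ N = T` of `∏_{k≥j} c (ψ k) k`. -/
noncomputable def bwd (c : ℕ → ℕ → ℝ) (T N i j : ℕ) : ℝ :=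
  ∑ ψ ∈ Finset.univ.filter
      (fun ψ : Fin (N - j + 1) → Fin (T - i + 1) =>
        StrictMono ψ ∧ (∀ k : Fin (N - j + 1), (k : ℕ) = 0 → ((ψ k : Fin (T - i + 1)) : ℕ) = 0)
          ∧ (∀ k : Fin (N - j + 1), (k : ℕ) = N - j → ((ψ k : Fin (T - i + 1)) : ℕ) = T - i)),
    ∏ k : Fin (N - j + 1), c (i + (ψ k : ℕ)) (j + (k : ℕ))

noncomputable def Ffun (N T : ℕ) (c : ℕ → ℕ → ℝ) (φ : Fin N → Fin T) (t : ℕ) : ℝ :=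
  if h : t < N then c ((φ ⟨t, h⟩).1 + 1) (t + 1) else 1

def splitFun (T N i j : ℕ) (hi1 : 1 ≤ i) (hj1 : 1 ≤ j) (hjN : j ≤ N) (φ : Fin N → Fin T) :
    (Fin j → Fin i) × (Fin (N - j + 1) → Fin (T - i + 1)) :=
  (fun k => ⟨min (φ ⟨k.1, by have := k.isLt; omega⟩).1 (i - 1), by omega⟩,
   fun m => ⟨min ((φ ⟨j - 1 + m.1, by have := m.isLt; omega⟩).1 - (i - 1)) (T - i), by omega⟩)

def glueFun (T N i j : ℕ) (hi1 : 1 ≤ i) (hiT : i ≤ T) (hj1 : 1 ≤ j) (hjN : j ≤ N)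
    (p : (Fin j → Fin i) × (Fin (N - j + 1) → Fin (T - i + 1))) (k : Fin N) : Fin T :=
  if h : k.1 < j then
    ⟨(p.1 ⟨k.1, h⟩).1, lt_of_lt_of_le (p.1 ⟨k.1, h⟩).isLt hiT⟩
  else
    let m : Fin (N - j + 1) := ⟨k.1 - (j - 1), by have := k.isLt; omega⟩
    ⟨i - 1 + (p.2 m).1, by have h2 := (p.2 m).isLt; omega⟩

set_option maxHeartbeats 1600000 in
open Finset in
lemma key (c : ℕ → ℕ → ℝ) (T N i j : ℕ)
    (hi1 : 1 ≤ i) (hiT : i ≤ T) (hj1 : 1 ≤ j) (hjN : j ≤ N) :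
    c i j * ∑ φ ∈ Finset.univ.filter
        (fun φ : Fin N → Fin T =>
          StrictMono φ ∧ ((φ ⟨N - 1, by omega⟩ : Fin T) : ℕ) = T - 1
            ∧ ((φ ⟨j - 1, Nat.sub_one_lt_of_le hj1 hjN⟩ : Fin T) : ℕ) = i - 1),
      ∏ k : Fin N, c ((φ k : ℕ) + 1) ((k : ℕ) + 1)
    = fwd c i j * bwd c T N i j := by
  have hN : 1 ≤ N := le_trans hj1 hjN
  rw [fwd, bwd, Finset.sum_mul_sum, ← Finset.sum_product', Finset.mul_sum]
  refine Finset.sum_nbij' (splitFun T N i j hi1 hj1 hjN)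
    (glueFun T N i j hi1 hiT hj1 hjN) ?_ ?_ ?_ ?_ ?_
  · intro φ hφ
    simp only [Finset.mem_filter, Finset.mem_univ, true_and, Finset.mem_product] at hφ ⊢
    obtain ⟨hmono, hlast, hmid⟩ := hφ
    have hle : ∀ (a b : ℕ) (ha : a < N) (hb : b < N), a ≤ b → (φ ⟨a, ha⟩).1 ≤ (φ ⟨b, hb⟩).1 :=
      fun a b ha hb h => hmono.monotone (show (⟨a, ha⟩ : Fin N) ≤ ⟨b, hb⟩ from h)
    have hlt : ∀ (a b : ℕ) (ha : a < N) (hb : b < N), a < b → (φ ⟨a, ha⟩).1 < (φ ⟨b, hb⟩).1 :=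
      fun a b ha hb h => hmono (show (⟨a, ha⟩ : Fin N) < ⟨b, hb⟩ from h)
    refine ⟨⟨?_, ?_⟩, ?_, ?_, ?_⟩
    · intro a b hab
      have h1 := hlt a.1 b.1 (by have := a.isLt; omega) (by have := b.isLt; omega)
        (Fin.lt_def.mp hab)
      have h2 := hle b.1 (j - 1) (by have := b.isLt; omega) (by omega)
        (by have := b.isLt; omega)
      simp only [splitFun, Fin.lt_def]
      omega
    · intro k hk
      have h1 := hle k.1 (j - 1) (by have := k.isLt; omega) (by omega) (by omega)
      have h2 := hle (j - 1) k.1 (by omega) (by have := k.isLt; omega) (by omega)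
      simp only [splitFun]
      omega
    · intro a b hab
      have h1 := hlt (j - 1 + a.1) (j - 1 + b.1) (by have := a.isLt; omega)
        (by have := b.isLt; omega) (by have := Fin.lt_def.mp hab; omega)
      have h2 := hle (j - 1) (j - 1 + a.1) (by omega) (by have := a.isLt; omega) (by omega)
      have h3 := (φ ⟨j - 1 + b.1, by have := b.isLt; omega⟩).isLt
      simp only [splitFun, Fin.lt_def]
      omega
    · intro k hk
      have h1 := hle (j - 1 + k.1) (j - 1) (by have := k.isLt; omega) (by omega) (by omega)
      have h2 := hle (j - 1) (j - 1 + k.1) (by omega) (by have := k.isLt; omega) (by omega)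
      simp only [splitFun]
      omega
    · intro k hk
      have h1 := hle (j - 1 + k.1) (N - 1) (by have := k.isLt; omega) (by omega) (by omega)
      have h2 := hle (N - 1) (j - 1 + k.1) (by omega) (by have := k.isLt; omega)
        (by have := k.isLt; omega)
      simp only [splitFun]
      omega
  · intro p hp
    simp only [Finset.mem_filter, Finset.mem_univ, true_and, Finset.mem_product] at hp ⊢
    obtain ⟨⟨m1, e1⟩, m2, e20, e2l⟩ := hp
    have g1lt : ∀ (a b : ℕ) (ha : a < j) (hb : b < j), a < b → (p.1 ⟨a, ha⟩).1 < (p.1 ⟨b, hb⟩).1 :=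
      fun a b ha hb h => m1 (show (⟨a, ha⟩ : Fin j) < ⟨b, hb⟩ from h)
    have g1le : ∀ (a b : ℕ) (ha : a < j) (hb : b < j), a ≤ b → (p.1 ⟨a, ha⟩).1 ≤ (p.1 ⟨b, hb⟩).1 :=
      fun a b ha hb h => m1.monotone (show (⟨a, ha⟩ : Fin j) ≤ ⟨b, hb⟩ from h)
    have g2lt : ∀ (a b : ℕ) (ha : a < N - j + 1) (hb : b < N - j + 1),
        a < b → (p.2 ⟨a, ha⟩).1 < (p.2 ⟨b, hb⟩).1 :=
      fun a b ha hb h => m2 (show (⟨a, ha⟩ : Fin (N - j + 1)) < ⟨b, hb⟩ from h)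
    have e1' : ∀ (a : ℕ) (ha : a < j), a = j - 1 → (p.1 ⟨a, ha⟩).1 = i - 1 :=
      fun a ha h => e1 ⟨a, ha⟩ h
    have e20' : ∀ (a : ℕ) (ha : a < N - j + 1), a = 0 → (p.2 ⟨a, ha⟩).1 = 0 :=
      fun a ha h => e20 ⟨a, ha⟩ h
    have e2l' : ∀ (a : ℕ) (ha : a < N - j + 1), a = N - j → (p.2 ⟨a, ha⟩).1 = T - i :=
      fun a ha h => e2l ⟨a, ha⟩ h
    refine ⟨?_, ?_, ?_⟩
    · intro a b hab
      have hab' := Fin.lt_def.mp hab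
      simp only [glueFun, Fin.lt_def]
      split_ifs with h1 h2 h3
      · have := g1lt a.1 b.1 h1 h2 hab'
        simp only []
        omega
      · have ha1 := g1le a.1 (j - 1) h1 (by omega) (by omega)
        have ha2 := e1' (j - 1) (by omega) rfl
        have ha3 := g2lt 0 (b.1 - (j - 1)) (by omega) (by have := b.isLt; omega) (by omega)
        have ha4 := e20' 0 (by omega) rfl
        simp only []
        omega
      · omega
      · have := g2lt (a.1 - (j - 1)) (b.1 - (j - 1)) (by have := a.isLt; omega)
          (by have := b.isLt; omega) (by omega)
        simp only []
        omega
    · simp only [glueFun]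
      split_ifs with h
      · have ha1 := e1' (N - 1) (by omega) (by omega)
        have ha2 := e20' 0 (by omega) rfl
        have ha3 := e2l' 0 (by omega) (by omega)
        simp only []
        omega
      · have ha1 := e2l' (N - 1 - (j - 1)) (by omega) (by omega)
        simp only []
        omega
    · simp only [glueFun]
      split_ifs with h
      · exact e1' (j - 1) (by omega) rfl
      · omega
  · intro φ hφ
    simp only [Finset.mem_filter, Finset.mem_univ, true_and] at hφ
    obtain ⟨hmono, hlast, hmid⟩ := hφ
    have hle : ∀ (a b : ℕ) (ha : a < N) (hb : b < N), a ≤ b → (φ ⟨a, ha⟩).1 ≤ (φ ⟨b, hb⟩).1 :=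
      fun a b ha hb h => hmono.monotone (show (⟨a, ha⟩ : Fin N) ≤ ⟨b, hb⟩ from h)
    have hcongr : ∀ (a : ℕ) (ha : a < N) (b : Fin N), a = b.1 →
        (φ ⟨a, ha⟩).1 = (φ b).1 := fun a ha b h => by
      rw [show (⟨a, ha⟩ : Fin N) = b from Fin.ext h]
    have hle2 : ∀ (a : Fin N) (b : ℕ) (hb : b < N), a.1 ≤ b → (φ a).1 ≤ (φ ⟨b, hb⟩).1 :=
      fun a b hb h => hmono.monotone (show a ≤ (⟨b, hb⟩ : Fin N) from h)
    have hle3 : ∀ (a : ℕ) (ha : a < N) (b : Fin N), a ≤ b.1 → (φ ⟨a, ha⟩).1 ≤ (φ b).1 :=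
      fun a ha b h => hmono.monotone (show (⟨a, ha⟩ : Fin N) ≤ b from h)
    funext k
    apply Fin.ext
    simp only [glueFun, splitFun, Fin.eta]
    split_ifs with h
    · have h1 := hle2 k (j - 1) (by omega) (by omega)
      simp only [Fin.eta]
      omega
    · have h1 := hle3 (j - 1) (by omega) k (by omega)
      have h2 := (φ k).isLt
      have h3 := hcongr (j - 1 + (k.1 - (j - 1))) (by have := k.isLt; omega) k (by omega)
      simp only [Fin.eta]
      omega
  · intro p hp
    simp only [Finset.mem_filter, Finset.mem_univ, true_and, Finset.mem_product] at hp
    obtain ⟨⟨m1, e1⟩, m2, e20, e2l⟩ := hp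
    have e1' : ∀ (a : ℕ) (ha : a < j), a = j - 1 → (p.1 ⟨a, ha⟩).1 = i - 1 :=
      fun a ha h => e1 ⟨a, ha⟩ h
    have hcongr1 : ∀ (a : ℕ) (ha : a < j) (b : Fin j), a = b.1 →
        (p.1 ⟨a, ha⟩).1 = (p.1 b).1 := fun a ha b h => by
      rw [show (⟨a, ha⟩ : Fin j) = b from Fin.ext h]
    have hcongr2 : ∀ (a : ℕ) (ha : a < N - j + 1) (b : Fin (N - j + 1)), a = b.1 →
        (p.2 ⟨a, ha⟩).1 = (p.2 b).1 := fun a ha b h => by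
      rw [show (⟨a, ha⟩ : Fin (N - j + 1)) = b from Fin.ext h]
    refine Prod.ext (funext fun k => Fin.ext ?_) (funext fun m => Fin.ext ?_)
    · simp only [splitFun, glueFun, Fin.eta]
      split_ifs with h
      · have h1 := hcongr1 k.1 h k rfl
        have h2 := (p.1 k).isLt
        simp only [Fin.eta]
        omega
      · exact absurd k.isLt h
    · simp only [splitFun, glueFun, Fin.eta]
      split_ifs with h
      · have ha1 := e1' (j - 1 + m.1) h (by omega)
        have ha2 := e20 m (by omega)
        simp only [Fin.eta]
        omega
      · have ha1 := hcongr2 (j - 1 + m.1 - (j - 1)) (by have := m.isLt; omega) m (by omega)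
        have ha2 := (p.2 m).isLt
        simp only [Fin.eta]
        omega
  · intro φ hφ
    simp only [Finset.mem_filter, Finset.mem_univ, true_and] at hφ
    obtain ⟨hmono, hlast, hmid⟩ := hφ
    have hle : ∀ (a b : ℕ) (ha : a < N) (hb : b < N), a ≤ b → (φ ⟨a, ha⟩).1 ≤ (φ ⟨b, hb⟩).1 :=
      fun a b ha hb h => hmono.monotone (show (⟨a, ha⟩ : Fin N) ≤ ⟨b, hb⟩ from h)
    have hF : ∀ (t : ℕ) (h : t < N), Ffun N T c φ t = c ((φ ⟨t, h⟩).1 + 1) (t + 1) :=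
      fun t h => dif_pos h
    have h0 : ∏ k : Fin N, c ((φ k : ℕ) + 1) ((k : ℕ) + 1)
        = ∏ t ∈ Finset.range N, Ffun N T c φ t := by
      rw [← Fin.prod_univ_eq_prod_range]
      exact Finset.prod_congr rfl fun k _ => (hF k.1 k.isLt).symm
    have h1 : (∏ k : Fin j, c (((splitFun T N i j hi1 hj1 hjN φ).1 k : ℕ) + 1) ((k : ℕ) + 1))
        = ∏ t ∈ Finset.range j, Ffun N T c φ t := by
      rw [← Fin.prod_univ_eq_prod_range]
      refine Finset.prod_congr rfl fun k _ => ?_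
      rw [hF k.1 (by have := k.isLt; omega)]
      simp only [splitFun]
      have h1 := hle k.1 (j - 1) (by have := k.isLt; omega) (by omega) (by have := k.isLt; omega)
      have hmin : min ((φ ⟨(k : ℕ), by have := k.isLt; omega⟩).1) (i - 1)
          = (φ ⟨(k : ℕ), by have := k.isLt; omega⟩).1 := by omega
      rw [hmin]
    have h2 : (∏ k : Fin (N - j + 1),
          c (i + ((splitFun T N i j hi1 hj1 hjN φ).2 k : ℕ)) (j + (k : ℕ)))
        = ∏ t ∈ Finset.Ico (j - 1) N, Ffun N T c φ t := by
      rw [Finset.prod_Ico_eq_prod_range, show N - (j - 1) = N - j + 1 from by omega,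
        ← Fin.prod_univ_eq_prod_range (fun t => Ffun N T c φ (j - 1 + t))]
      refine Finset.prod_congr rfl fun k _ => ?_
      rw [hF (j - 1 + k.1) (by have := k.isLt; omega)]
      simp only [splitFun]
      have ha1 := hle (j - 1) (j - 1 + k.1) (by omega) (by have := k.isLt; omega) (by omega)
      have ha2 := (φ ⟨j - 1 + k.1, by have := k.isLt; omega⟩).isLt
      exact congr_arg₂ c (by omega) (by omega)
    have h4 : ∏ t ∈ Finset.range j, Ffun N T c φ t
        = (∏ t ∈ Finset.range (j - 1), Ffun N T c φ t) * Ffun N T c φ (j - 1) := by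
      conv_lhs => rw [show j = (j - 1) + 1 from by omega]
      rw [Finset.prod_range_succ]
    have h5 : Ffun N T c φ (j - 1) = c i j := by
      rw [hF (j - 1) (by omega)]
      exact congr_arg₂ c (by omega) (by omega)
    rw [h0, h1, h2, h4, h5,
      ← Finset.prod_range_mul_prod_Ico (Ffun N T c φ) (show j - 1 ≤ N from by omega)]
    ring

open Finset in
lemma hIcc_sum (N : ℕ) (g : ℕ → ℝ) :
    ∑ j ∈ Finset.Icc 1 N, g j = ∑ k : Fin N, g ((k : ℕ) + 1) := by
  rw [← Finset.Ico_add_one_right_eq_Icc, Finset.sum_Ico_eq_sum_range,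
    show N + 1 - 1 = N from rfl,
    ← Fin.sum_univ_eq_sum_range (fun t => g (1 + t)) N]
  exact Finset.sum_congr rfl fun k _ => by rw [Nat.add_comm]

open Finset in
lemma marg (cost : ℕ → ℕ → ℝ) (T N : ℕ) (hN : 1 ≤ N) (hNT : N ≤ T)
    (q : (Fin N → Fin T) → ℝ) :
    ∑ φ ∈ Finset.univ.filter
        (fun φ : Fin N → Fin T =>
          StrictMono φ ∧ ((φ ⟨N - 1, Nat.sub_one_lt_of_le hN le_rfl⟩ : Fin T) : ℕ) = T - 1),
      q φ * ∑ k : Fin N, cost ((φ k : ℕ) + 1) ((k : ℕ) + 1)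
    = ∑ i ∈ Finset.Icc 1 T, ∑ j ∈ Finset.Icc 1 N,
        (∑ φ ∈ (Finset.univ.filter
            (fun φ : Fin N → Fin T =>
              StrictMono φ ∧ ((φ ⟨N - 1, Nat.sub_one_lt_of_le hN le_rfl⟩ : Fin T) : ℕ) = T - 1)).filter
            (fun φ => ((φ ⟨min (j - 1) (N - 1), by omega⟩ : Fin T) : ℕ) + 1 = i), q φ)
          * cost i j := by
  conv_rhs => rw [Finset.sum_comm]
  simp only [Finset.mul_sum]
  rw [Finset.sum_comm]
  rw [hIcc_sum N]
  refine Finset.sum_congr rfl fun k _ => ?_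
  have hk : (⟨min ((k : ℕ) + 1 - 1) (N - 1), by omega⟩ : Fin N) = k :=
    Fin.ext (by have := k.isLt; simp; omega)
  rw [hk]
  have hmap : ∀ φ ∈ Finset.univ.filter
      (fun φ : Fin N → Fin T =>
        StrictMono φ ∧ ((φ ⟨N - 1, Nat.sub_one_lt_of_le hN le_rfl⟩ : Fin T) : ℕ) = T - 1),
      (φ k : ℕ) + 1 ∈ Finset.Icc 1 T := by
    intro φ _
    have := (φ k).isLt
    simp only [Finset.mem_Icc]
    omega
  rw [← Finset.sum_fiberwise_of_maps_to hmap
    (fun φ => q φ * cost ((φ k : ℕ) + 1) ((k : ℕ) + 1))]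
  refine Finset.sum_congr rfl fun i _ => ?_
  rw [Finset.sum_mul]
  refine Finset.sum_congr rfl fun φ hφ => ?_
  have h2 := (Finset.mem_filter.mp hφ).2
  rw [h2]

/-- In the Gibbs distribution over monotone alignments,
`p(φ) = exp(−∑_k cost(φ k, k)) / Z` with `Z = fwd T N` and `c i j = exp(−cost i j)`:
(1) the marginal probability that `z_j` aligns to `x_i` equals
`w i j = fwd i j * bwd i j / (c i j * Z)`, and
(2) the expected total cost equals `∑_{i,j} w i j * cost i j`. -/
theorem gibbs_alignment_marginals (cost : ℕ → ℕ → ℝ) (c : ℕ → ℕ → ℝ)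
    (hc : ∀ i j, c i j = Real.exp (-cost i j))
    (T N : ℕ) (hN : 1 ≤ N) (hNT : N ≤ T)
    (Z : ℝ) (hZ : Z = fwd c T N) :
    (∀ (i j : ℕ) (_ : 1 ≤ i) (_ : i ≤ T) (_ : 1 ≤ j) (_ : j ≤ N),
      (∑ φ ∈ Finset.univ.filter
          (fun φ : Fin N → Fin T =>
            StrictMono φ ∧ ((φ ⟨N - 1, by omega⟩ : Fin T) : ℕ) = T - 1
              ∧ ((φ ⟨j - 1, by omega⟩ : Fin T) : ℕ) = i - 1),
        Real.exp (-∑ k : Fin N, cost ((φ k : ℕ) + 1) ((k : ℕ) + 1)) / Z)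
        = fwd c i j * bwd c T N i j / (c i j * Z))
    ∧ (∑ φ ∈ Finset.univ.filter
        (fun φ : Fin N → Fin T =>
          StrictMono φ ∧ ((φ ⟨N - 1, by omega⟩ : Fin T) : ℕ) = T - 1),
      (Real.exp (-∑ k : Fin N, cost ((φ k : ℕ) + 1) ((k : ℕ) + 1)) / Z)
        * ∑ k : Fin N, cost ((φ k : ℕ) + 1) ((k : ℕ) + 1))
      = ∑ i ∈ Finset.Icc 1 T, ∑ j ∈ Finset.Icc 1 N,
          (fwd c i j * bwd c T N i j / (c i j * Z)) * cost i j := by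
  have hcne : ∀ i j, c i j ≠ 0 := fun i j => by rw [hc]; exact (Real.exp_pos _).ne'
  have hexp : ∀ φ : Fin N → Fin T,
      Real.exp (-∑ k : Fin N, cost ((φ k : ℕ) + 1) ((k : ℕ) + 1))
        = ∏ k : Fin N, c ((φ k : ℕ) + 1) ((k : ℕ) + 1) := by
    intro φ
    rw [← Finset.sum_neg_distrib, Real.exp_sum]
    exact Finset.prod_congr rfl fun k _ => (hc _ _).symm
  have part1 : ∀ (i j : ℕ) (_ : 1 ≤ i) (_ : i ≤ T) (_ : 1 ≤ j) (_ : j ≤ N),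
      (∑ φ ∈ Finset.univ.filter
          (fun φ : Fin N → Fin T =>
            StrictMono φ ∧ ((φ ⟨N - 1, by omega⟩ : Fin T) : ℕ) = T - 1
              ∧ ((φ ⟨j - 1, by omega⟩ : Fin T) : ℕ) = i - 1),
        Real.exp (-∑ k : Fin N, cost ((φ k : ℕ) + 1) ((k : ℕ) + 1)) / Z)
        = fwd c i j * bwd c T N i j / (c i j * Z) := by
    intro i j hi1 hiT hj1 hjN
    have hkey := key c T N i j hi1 hiT hj1 hjN
    simp only [hexp]
    rw [← Finset.sum_div]
    have hS : ∑ φ ∈ Finset.univ.filter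
        (fun φ : Fin N → Fin T =>
          StrictMono φ ∧ ((φ ⟨N - 1, by omega⟩ : Fin T) : ℕ) = T - 1
            ∧ ((φ ⟨j - 1, by omega⟩ : Fin T) : ℕ) = i - 1),
        ∏ k : Fin N, c ((φ k : ℕ) + 1) ((k : ℕ) + 1)
        = fwd c i j * bwd c T N i j / c i j := by
      rw [eq_div_iff (hcne i j), mul_comm]
      exact hkey
    rw [hS, div_div]
  refine ⟨part1, ?_⟩
  have hq := marg cost T N hN hNT
    (fun φ => Real.exp (-∑ k : Fin N, cost ((φ k : ℕ) + 1) ((k : ℕ) + 1)) / Z)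
  rw [hq]
  refine Finset.sum_congr rfl fun i hi => Finset.sum_congr rfl fun j hj => ?_
  simp only [Finset.mem_Icc] at hi hj
  rw [← part1 i j hi.1 hi.2 hj.1 hj.2]
  congr 1
  rw [Finset.filter_filter]
  refine Finset.sum_congr ?_ fun _ _ => rfl
  refine Finset.filter_congr fun φ _ => ?_
  have hk : (⟨min (j - 1) (N - 1), by omega⟩ : Fin N) = ⟨j - 1, by omega⟩ :=
    Fin.ext (by simp; omega)
  rw [hk]
  constructor
  · rintro ⟨⟨h1, h2⟩, h3⟩
    exact ⟨h1, h2, by omega⟩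
  · rintro ⟨h1, h2, h3⟩
    exact ⟨⟨h1, h2⟩, by omega⟩
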